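/- Let K be a finite semimodular lattice whose set of join-irreducible elements is the union of two chains, and suppose K has exactly two join-irreducible congruences. Then Con K is the four-element Boolean lattice, and K is isomorphic either to the three-element chain or to the four-element Boolean lattice. -/

import Mathlib

/-- A lattice congruence: an equivalence relation compatible with `⊔` and `⊓`. -/
def IsLatCon {L : Type*} [Lattice L] (r : L → L → Prop) : Prop :=
  Equivalence r ∧
    (∀ a b c d : L, r a b → r c d → r (a ⊔ c) (b ⊔ d)) ∧
    (∀ a b c d : L, r a b → r c d → r (a ⊓ c) (b ⊓ d))

/-- The congruences of a lattice, ordered by inclusion. -/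
def LatCon (L : Type*) [Lattice L] := {r : L → L → Prop // IsLatCon r}

instance {L : Type*} [Lattice L] : PartialOrder (LatCon L) :=
  Subtype.partialOrder _

set_option linter.unusedSectionVars false
set_option linter.unusedVariables false

section FiniteLattice

variable {L : Type*} [Lattice L] [Finite L]

/-- In a finite order, below any element of `S` there is a minimal element of `S`. -/
lemma exists_minimal_le' {S : Set L} {x : L} (hx : x ∈ S) :
    ∃ m, m ∈ S ∧ m ≤ x ∧ ∀ y ∈ S, ¬ y < m := by
  revert hx
  induction x using WellFoundedLT.induction with
  | ind x ih =>
    intro hx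
    by_cases h : ∃ y ∈ S, y < x
    · obtain ⟨y, hyS, hyx⟩ := h
      obtain ⟨m, h1, h2, h3⟩ := ih y hyx hyS
      exact ⟨m, h1, h2.trans hyx.le, h3⟩
    · exact ⟨x, hx, le_rfl, fun y hy hlt => h ⟨y, hy, hlt⟩⟩

/-- In a finite order, above any element of `S` there is a maximal element of `S`. -/
lemma exists_maximal_ge' {S : Set L} {x : L} (hx : x ∈ S) :
    ∃ m, m ∈ S ∧ x ≤ m ∧ ∀ y ∈ S, ¬ m < y := by
  revert hx
  induction x using WellFoundedGT.induction with
  | ind x ih =>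
    intro hx
    by_cases h : ∃ y ∈ S, x < y
    · obtain ⟨y, hyS, hyx⟩ := h
      obtain ⟨m, h1, h2, h3⟩ := ih y hyx hyS
      exact ⟨m, h1, hyx.le.trans h2, h3⟩
    · exact ⟨x, hx, le_rfl, fun y hy hlt => h ⟨y, hy, hlt⟩⟩

variable [OrderBot L]

/-- Every element of a finite lattice is the sup of the sup-irreducibles below it. -/
lemma exists_supIrred_decomp (x : L) :
    ∃ S : Finset L, (∀ j ∈ S, SupIrred j ∧ j ≤ x) ∧ S.sup id = x := by
  classical
  induction x using WellFoundedLT.induction with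
  | ind x ih =>
    by_cases hbot : x = ⊥
    · exact ⟨∅, by simp, by simp [hbot]⟩
    by_cases hirr : SupIrred x
    · exact ⟨{x}, by simp [hirr], by simp⟩
    · have hmin : ¬ IsMin x := fun h => hbot (h.eq_bot)
      rw [SupIrred] at hirr
      push_neg at hirr
      obtain ⟨b, c, hbc, hb, hc⟩ := hirr hmin
      have hbx : b < x := lt_of_le_of_ne (hbc ▸ le_sup_left) hb
      have hcx : c < x := lt_of_le_of_ne (hbc ▸ le_sup_right) hc
      obtain ⟨Sb, hSb, hSb2⟩ := ih b hbx
      obtain ⟨Sc, hSc, hSc2⟩ := ih c hcx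
      refine ⟨Sb ∪ Sc, ?_, ?_⟩
      · intro j hj
        rcases Finset.mem_union.1 hj with h | h
        · exact ⟨(hSb j h).1, (hSb j h).2.trans hbx.le⟩
        · exact ⟨(hSc j h).1, (hSc j h).2.trans hcx.le⟩
      · rw [Finset.sup_union, hSb2, hSc2, hbc]

/-- In a finite lattice, sup-irreducibility is equivalent to having a unique lower cover. -/
lemma supIrred_iff_unique_covBy (x : L) : SupIrred x ↔ ∃! y, y ⋖ x := by
  classical
  have := Fintype.ofFinite L
  constructor
  · intro hx
    set s : L := (Finset.univ.filter (· < x)).sup id with hs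
    have hsle : s ≤ x := Finset.sup_le (fun b hb => (Finset.mem_filter.1 hb).2.le)
    have hsne : s ≠ x := by
      intro h
      obtain ⟨j, hj, hj2⟩ := hx.finset_sup_eq h
      exact absurd (hj2 ▸ (Finset.mem_filter.1 hj).2) (lt_irrefl x)
    have hslt : s < x := lt_of_le_of_ne hsle hsne
    have hle_s : ∀ z, z < x → z ≤ s := fun z hz =>
      Finset.le_sup (f := id) (Finset.mem_filter.2 ⟨Finset.mem_univ z, hz⟩)
    have hcov : s ⋖ x := ⟨hslt, fun z hz hzx => absurd (hle_s z hzx) hz.not_ge⟩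
    refine ⟨s, hcov, fun y hy => ?_⟩
    have h1 : y ≤ s := hle_s y hy.lt
    rcases eq_or_lt_of_le h1 with h | h
    · exact h
    · exact absurd hslt (hy.2 h)
  · rintro ⟨c, hc, hcu⟩
    constructor
    · intro h
      exact absurd hc.lt (h.not_lt)
    · intro b c' hbc
      by_contra hcon
      push_neg at hcon
      obtain ⟨hb, hc'⟩ := hcon
      have hbx : b < x := lt_of_le_of_ne (hbc ▸ le_sup_left) hb
      have hcx : c' < x := lt_of_le_of_ne (hbc ▸ le_sup_right) hc'
      have hlec : ∀ z, z < x → z ≤ c := by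
        intro z hz
        obtain ⟨m, hm, hzm, hmax⟩ := exists_maximal_ge' (S := {y | z ≤ y ∧ y < x}) ⟨le_rfl, hz⟩
        have hmcov : m ⋖ x := by
          refine ⟨hm.2, fun w hw hwx => ?_⟩
          exact hmax w ⟨hm.1.trans hw.le, hwx⟩ hw
        exact (hcu m hmcov) ▸ hzm
      have : x ≤ c := hbc ▸ sup_le (hlec b hbx) (hlec c' hcx)
      exact hc.lt.not_ge this

/-- If the only sup-irreducibles are `α` and `β`, every element is one of four. -/
lemma mem_four_of_supIrred {α β : L}
    (hs : ∀ x : L, SupIrred x → (x = α ∨ x = β)) (x : L) :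
    x = ⊥ ∨ x = α ∨ x = β ∨ x = α ⊔ β := by
  obtain ⟨S, hS, hsup⟩ := exists_supIrred_decomp x
  by_cases hα : α ≤ x <;> by_cases hβ : β ≤ x
  · right; right; right
    refine le_antisymm ?_ (sup_le hα hβ)
    rw [← hsup]
    refine Finset.sup_le fun j hj => ?_
    rcases hs j (hS j hj).1 with h | h
    · exact h ▸ le_sup_left
    · exact h ▸ le_sup_right
  · right; left
    refine le_antisymm ?_ hα
    rw [← hsup]
    refine Finset.sup_le fun j hj => ?_
    rcases hs j (hS j hj).1 with h | h
    · exact h.le.trans (le_refl α)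
    · exact absurd (h ▸ (hS j hj).2) hβ
  · right; right; left
    refine le_antisymm ?_ hβ
    rw [← hsup]
    refine Finset.sup_le fun j hj => ?_
    rcases hs j (hS j hj).1 with h | h
    · exact absurd (h ▸ (hS j hj).2) hα
    · exact h.le
  · left
    rw [← hsup]
    have : S = ∅ := by
      by_contra hS0
      obtain ⟨j, hj⟩ := Finset.nonempty_iff_ne_empty.2 hS0
      rcases hs j (hS j hj).1 with h | h
      · exact hα (h ▸ (hS j hj).2)
      · exact hβ (h ▸ (hS j hj).2)
    simp [this]

/-- The sup of a finset of elements from a chain is `⊥` or a member. -/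
lemma chain_finset_sup {C : Set L} (hC : IsChain (· ≤ ·) C) (T : Finset L)
    (hT : ∀ j ∈ T, j ∈ C) : T.sup id = ⊥ ∨ T.sup id ∈ T := by
  classical
  induction T using Finset.induction with
  | empty => simp
  | @insert a T ha ih =>
    have hT' : ∀ j ∈ T, j ∈ C := fun j hj => hT j (Finset.mem_insert_of_mem hj)
    rw [Finset.sup_insert]
    simp only [id_eq]
    rcases ih hT' with h | h
    · right; rw [h, sup_bot_eq]; exact Finset.mem_insert_self _ _
    · rcases eq_or_ne a (T.sup id) with he | hne
      · right; rw [← he, sup_idem]; exact Finset.mem_insert_self _ _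
      · rcases hC (hT a (Finset.mem_insert_self _ _)) (hT' _ h) hne with hle | hle
        · right; rw [sup_eq_right.2 hle]; exact Finset.mem_insert_of_mem h
        · right; rw [sup_eq_left.2 hle]; exact Finset.mem_insert_self _ _

lemma IsAtom.supIrred' {a : L} (ha : IsAtom a) : SupIrred a := by
  constructor
  · intro h
    exact ha.1 (le_antisymm (h bot_le) bot_le)
  · intro b c hbc
    by_contra hcon
    push_neg at hcon
    have hb : b = ⊥ := ha.2 b (lt_of_le_of_ne (hbc ▸ le_sup_left) hcon.1)
    have hc : c = ⊥ := ha.2 c (lt_of_le_of_ne (hbc ▸ le_sup_right) hcon.2)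
    exact ha.1 (by rw [← hbc, hb, hc, sup_idem])

/-- Key lemma: in a "slim" lattice (sup-irreducibles contained in a union of
two chains), every atom is join-prime. -/
lemma atom_joinPrime {C U : Set L} (hC : IsChain (· ≤ ·) C) (hU : IsChain (· ≤ ·) U)
    (hCU : ∀ j : L, SupIrred j → j ∈ C ∪ U) {a : L} (ha : IsAtom a) :
    ∀ x y : L, a ≤ x ⊔ y → a ≤ x ∨ a ≤ y := by
  classical
  intro x y hxy
  obtain ⟨Sx, hSx, hSx2⟩ := exists_supIrred_decomp x
  obtain ⟨Sy, hSy, hSy2⟩ := exists_supIrred_decomp y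
  set T : Finset L := Sx ∪ Sy with hT
  have hTsup : T.sup id = x ⊔ y := by rw [hT, Finset.sup_union, hSx2, hSy2]
  have hTj : ∀ j ∈ T, SupIrred j := by
    intro j hj
    rcases Finset.mem_union.1 hj with h | h
    · exact (hSx j h).1
    · exact (hSy j h).1
  have hTle : ∀ j ∈ T, a ≤ j → (a ≤ x ∨ a ≤ y) := by
    intro j hj haj
    rcases Finset.mem_union.1 hj with h | h
    · exact Or.inl (haj.trans (hSx j h).2)
    · exact Or.inr (haj.trans (hSy j h).2)
  -- the atom is sup-irreducible, hence in C or U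
  have key : ∀ V W : Set L, IsChain (· ≤ ·) V → IsChain (· ≤ ·) W →
      (∀ j ∈ T, j ∈ V ∪ W) → a ∈ V → ∃ j ∈ T, a ≤ j := by
    intro V W hV hW hTVW haV
    by_cases hex : ∃ j ∈ T, j ∈ V
    · obtain ⟨j, hjT, hjV⟩ := hex
      rcases eq_or_ne a j with he | hne
      · exact ⟨j, hjT, he.le⟩
      rcases hV haV hjV hne with hle | hle
      · exact ⟨j, hjT, hle⟩
      · rcases eq_or_lt_of_le hle with he | hlt
        · exact ⟨j, hjT, he.ge⟩
        · exact absurd (ha.2 j hlt) (hTj j hjT).ne_bot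
    · -- all of T is in the chain W
      have hTW : ∀ j ∈ T, j ∈ W := by
        intro j hj
        rcases hTVW j hj with h | h
        · exact absurd ⟨j, hj, h⟩ hex
        · exact h
      rcases chain_finset_sup hW T hTW with h | h
      · rw [hTsup] at h
        exact absurd (hxy.trans h.le) ha.1.bot_lt.not_ge
      · exact ⟨T.sup id, h, hTsup ▸ hxy⟩
  rcases hCU a ha.supIrred' with haC | haU
  · obtain ⟨j, hjT, haj⟩ := key C U hC hU (fun j hj => hCU j (hTj j hj)) haC
    exact hTle j hjT haj
  · obtain ⟨j, hjT, haj⟩ := key U C hU hC (fun j hj => (hCU j (hTj j hj)).symm) haU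
    exact hTle j hjT haj

end FiniteLattice



section LatConBasic

variable {K : Type*} [Lattice K]

lemma latCon_le_iff (θ ψ : LatCon K) : θ ≤ ψ ↔ ∀ x y : K, θ.1 x y → ψ.1 x y :=
  Iff.rfl

lemma latCon_ext {θ ψ : LatCon K} (h : ∀ x y : K, θ.1 x y ↔ ψ.1 x y) : θ = ψ :=
  Subtype.ext (funext fun x => funext fun y => propext (h x y))

lemma latCon_ne_of_witness {θ ψ : LatCon K} {x y : K} (h1 : θ.1 x y) (h2 : ¬ ψ.1 x y) :
    θ ≠ ψ := fun h => h2 (h ▸ h1)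

lemma latCon_not_le_of_witness {θ ψ : LatCon K} {x y : K} (h1 : θ.1 x y) (h2 : ¬ ψ.1 x y) :
    ¬ θ ≤ ψ := fun h => h2 (h x y h1)

/-- The bottom congruence: equality. -/
def conBot : LatCon K :=
  ⟨Eq, ⟨⟨fun _ => rfl, Eq.symm, Eq.trans⟩,
    fun a b c d h1 h2 => by rw [h1, h2], fun a b c d h1 h2 => by rw [h1, h2]⟩⟩

/-- The top congruence: everything related. -/
def conTop : LatCon K :=
  ⟨fun _ _ => True, ⟨⟨fun _ => trivial, fun _ => trivial, fun _ _ => trivial⟩,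
    fun _ _ _ _ _ _ => trivial, fun _ _ _ _ _ _ => trivial⟩⟩

/-- Binary intersection of congruences. -/
def conInf (θ ψ : LatCon K) : LatCon K :=
  ⟨fun x y => θ.1 x y ∧ ψ.1 x y,
    ⟨⟨fun x => ⟨θ.2.1.refl x, ψ.2.1.refl x⟩,
      fun h => ⟨θ.2.1.symm h.1, ψ.2.1.symm h.2⟩,
      fun h h' => ⟨θ.2.1.trans h.1 h'.1, ψ.2.1.trans h.2 h'.2⟩⟩,
     fun a b c d h1 h2 => ⟨θ.2.2.1 a b c d h1.1 h2.1, ψ.2.2.1 a b c d h1.2 h2.2⟩,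
     fun a b c d h1 h2 => ⟨θ.2.2.2 a b c d h1.1 h2.1, ψ.2.2.2 a b c d h1.2 h2.2⟩⟩⟩

/-- Join of congruences, via the intersection of common upper bounds. -/
def conSup (θ ψ : LatCon K) : LatCon K :=
  ⟨fun x y => ∀ ρ : LatCon K, θ ≤ ρ → ψ ≤ ρ → ρ.1 x y,
    ⟨⟨fun x ρ _ _ => ρ.2.1.refl x,
      fun h ρ h1 h2 => ρ.2.1.symm (h ρ h1 h2),
      fun h h' ρ h1 h2 => ρ.2.1.trans (h ρ h1 h2) (h' ρ h1 h2)⟩,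
     fun a b c d h1 h2 ρ hr1 hr2 => ρ.2.2.1 a b c d (h1 ρ hr1 hr2) (h2 ρ hr1 hr2),
     fun a b c d h1 h2 ρ hr1 hr2 => ρ.2.2.2 a b c d (h1 ρ hr1 hr2) (h2 ρ hr1 hr2)⟩⟩

/-- The lattice structure on congruences (same underlying order). -/
@[reducible]
def latConLattice : Lattice (LatCon K) :=
  { (inferInstance : PartialOrder (LatCon K)) with
    sup := conSup
    le_sup_left := fun θ ψ x y h ρ h1 _ => h1 x y h
    le_sup_right := fun θ ψ x y h ρ _ h2 => h2 x y h
    sup_le := fun θ ψ ρ h1 h2 x y h => h ρ h1 h2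
    inf := conInf
    inf_le_left := fun θ ψ x y h => h.1
    inf_le_right := fun θ ψ x y h => h.2
    le_inf := fun θ ψ ρ h1 h2 x y h => ⟨h1 x y h, h2 x y h⟩ }

@[reducible]
def latConOrderBot : OrderBot (LatCon K) :=
  { bot := conBot
    bot_le := fun θ x y h => h ▸ θ.2.1.refl x }

instance latConFinite [Finite K] : Finite (LatCon K) := by
  unfold LatCon
  infer_instance

end LatConBasic

section Constructions

variable {K : Type*} [Lattice K]

/-- The two-block congruence attached to a join-prime element. -/
def conPrime (j : K) (hjp : ∀ x y : K, j ≤ x ⊔ y → j ≤ x ∨ j ≤ y) : LatCon K := by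
  refine ⟨fun x y => (j ≤ x ↔ j ≤ y), ⟨⟨fun x => Iff.rfl, Iff.symm, Iff.trans⟩, ?_, ?_⟩⟩
  · intro a b c d h1 h2
    constructor
    · intro h
      rcases hjp _ _ h with h' | h'
      · exact le_sup_of_le_left (h1.1 h')
      · exact le_sup_of_le_right (h2.1 h')
    · intro h
      rcases hjp _ _ h with h' | h'
      · exact le_sup_of_le_left (h1.2 h')
      · exact le_sup_of_le_right (h2.2 h')
  · intro a b c d h1 h2
    simp only [le_inf_iff]
    exact and_congr h1 h2

@[simp] lemma conPrime_rel (j : K) (hjp) (x y : K) :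
    (conPrime j hjp).1 x y ↔ (j ≤ x ↔ j ≤ y) := Iff.rfl

/-- Gluing a single pair `u < v` when it is harmless. -/
def conPair (u v : K)
    (hsup : ∀ c : K, u ⊔ c = v ⊔ c ∨ (u ⊔ c = u ∧ v ⊔ c = v))
    (hinf : ∀ c : K, u ⊓ c = v ⊓ c ∨ (u ⊓ c = u ∧ v ⊓ c = v)) : LatCon K := by
  refine ⟨fun x y => x = y ∨ (x = u ∧ y = v) ∨ (x = v ∧ y = u),
    ⟨⟨fun x => Or.inl rfl, ?_, ?_⟩, ?_, ?_⟩⟩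
  · rintro x y (h | ⟨ha, hb⟩ | ⟨ha, hb⟩)
    · exact Or.inl h.symm
    · exact Or.inr (Or.inr ⟨hb, ha⟩)
    · exact Or.inr (Or.inl ⟨hb, ha⟩)
  · rintro x y z (h1 | ⟨ha, hb⟩ | ⟨ha, hb⟩) (h2 | ⟨hc, hd⟩ | ⟨hc, hd⟩)
    · exact Or.inl (h1.trans h2)
    · exact Or.inr (Or.inl ⟨h1.trans hc, hd⟩)
    · exact Or.inr (Or.inr ⟨h1.trans hc, hd⟩)
    · exact Or.inr (Or.inl ⟨ha, h2.symm.trans hb⟩)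
    · exact Or.inr (Or.inl ⟨ha, hd⟩)
    · exact Or.inl (ha.trans hd.symm)
    · exact Or.inr (Or.inr ⟨ha, h2.symm.trans hb⟩)
    · exact Or.inl (ha.trans hd.symm)
    · exact Or.inr (Or.inr ⟨ha, hd⟩)
  · rintro a b c d (h1 | ⟨ha, hb⟩ | ⟨ha, hb⟩) (h2 | ⟨hc, hd⟩ | ⟨hc, hd⟩)
    · exact Or.inl (by rw [h1, h2])
    · rcases hsup a with h | ⟨hA, hB⟩
      · exact Or.inl (by rw [hc, hd, ← h1, sup_comm a u, sup_comm a v]; exact h)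
      · exact Or.inr (Or.inl ⟨by rw [hc, sup_comm]; exact hA, by rw [hd, ← h1, sup_comm]; exact hB⟩)
    · rcases hsup a with h | ⟨hA, hB⟩
      · exact Or.inl (by rw [hc, hd, ← h1, sup_comm a v, sup_comm a u]; exact h.symm)
      · exact Or.inr (Or.inr ⟨by rw [hc, sup_comm]; exact hB, by rw [hd, ← h1, sup_comm]; exact hA⟩)
    · rcases hsup c with h | ⟨hA, hB⟩
      · exact Or.inl (by rw [ha, hb, ← h2]; exact h)
      · exact Or.inr (Or.inl ⟨by rw [ha]; exact hA, by rw [hb, ← h2]; exact hB⟩)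
    · exact Or.inr (Or.inl ⟨by rw [ha, hc, sup_idem], by rw [hb, hd, sup_idem]⟩)
    · exact Or.inl (by rw [ha, hb, hc, hd, sup_comm])
    · rcases hsup c with h | ⟨hA, hB⟩
      · exact Or.inl (by rw [ha, hb, ← h2]; exact h.symm)
      · exact Or.inr (Or.inr ⟨by rw [ha]; exact hB, by rw [hb, ← h2]; exact hA⟩)
    · exact Or.inl (by rw [ha, hb, hc, hd, sup_comm])
    · exact Or.inr (Or.inr ⟨by rw [ha, hc, sup_idem], by rw [hb, hd, sup_idem]⟩)
  · rintro a b c d (h1 | ⟨ha, hb⟩ | ⟨ha, hb⟩) (h2 | ⟨hc, hd⟩ | ⟨hc, hd⟩)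
    · exact Or.inl (by rw [h1, h2])
    · rcases hinf a with h | ⟨hA, hB⟩
      · exact Or.inl (by rw [hc, hd, ← h1, inf_comm a u, inf_comm a v]; exact h)
      · exact Or.inr (Or.inl ⟨by rw [hc, inf_comm]; exact hA, by rw [hd, ← h1, inf_comm]; exact hB⟩)
    · rcases hinf a with h | ⟨hA, hB⟩
      · exact Or.inl (by rw [hc, hd, ← h1, inf_comm a v, inf_comm a u]; exact h.symm)
      · exact Or.inr (Or.inr ⟨by rw [hc, inf_comm]; exact hB, by rw [hd, ← h1, inf_comm]; exact hA⟩)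
    · rcases hinf c with h | ⟨hA, hB⟩
      · exact Or.inl (by rw [ha, hb, ← h2]; exact h)
      · exact Or.inr (Or.inl ⟨by rw [ha]; exact hA, by rw [hb, ← h2]; exact hB⟩)
    · exact Or.inr (Or.inl ⟨by rw [ha, hc, inf_idem], by rw [hb, hd, inf_idem]⟩)
    · exact Or.inl (by rw [ha, hb, hc, hd, inf_comm])
    · rcases hinf c with h | ⟨hA, hB⟩
      · exact Or.inl (by rw [ha, hb, ← h2]; exact h.symm)
      · exact Or.inr (Or.inr ⟨by rw [ha]; exact hB, by rw [hb, ← h2]; exact hA⟩)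
    · exact Or.inl (by rw [ha, hb, hc, hd, inf_comm])
    · exact Or.inr (Or.inr ⟨by rw [ha, hc, inf_idem], by rw [hb, hd, inf_idem]⟩)

@[simp] lemma conPair_rel (u v : K) (hsup hinf) (x y : K) :
    (conPair u v hsup hinf).1 x y ↔ (x = y ∨ (x = u ∧ y = v) ∨ (x = v ∧ y = u)) := Iff.rfl

end Constructions

section Constructions2

variable {K : Type*} [Lattice K]

/-- Three-block congruence: `{b}`, elements above `a` reaching `a₂`, and the rest above `a`. -/
def conUpper (b a a₂ : K) (hb : ∀ x : K, b ≤ x) (ha : ∀ x : K, x ≠ b → a ≤ x)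
    (hrjp : ∀ x y : K, a ≤ x → a ≤ y → a₂ ≤ x ⊔ y → a₂ ≤ x ∨ a₂ ≤ y) : LatCon K := by
  refine ⟨fun x y => x = y ∨ (a ≤ x ∧ a ≤ y ∧ (a₂ ≤ x ↔ a₂ ≤ y)),
    ⟨⟨fun x => Or.inl rfl, ?_, ?_⟩, ?_, ?_⟩⟩
  · rintro x y (h | ⟨h1, h2, h3⟩)
    · exact Or.inl h.symm
    · exact Or.inr ⟨h2, h1, h3.symm⟩
  · rintro x y z (h | ⟨h1, h2, h3⟩) (h' | ⟨h4, h5, h6⟩)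
    · exact Or.inl (h.trans h')
    · exact h ▸ Or.inr ⟨h ▸ h4, h5, h ▸ h6⟩
    · exact Or.inr ⟨h1, h' ▸ h2, h' ▸ h3⟩
    · exact Or.inr ⟨h1, h5, h3.trans h6⟩
  · -- sup compatibility
    have key : ∀ x z w : K, a ≤ z → a ≤ w → (a₂ ≤ z ↔ a₂ ≤ w) →
        (x ⊔ z = x ⊔ w) ∨ (a ≤ x ⊔ z ∧ a ≤ x ⊔ w ∧ (a₂ ≤ x ⊔ z ↔ a₂ ≤ x ⊔ w)) := by
      intro x z w hz hw hiff
      by_cases hxb : x = b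
      · subst hxb
        refine Or.inr ⟨le_trans hz le_sup_right, le_trans hw le_sup_right, ?_⟩
        rw [sup_eq_right.2 (hb z), sup_eq_right.2 (hb w)]
        exact hiff
      · have hax : a ≤ x := ha x hxb
        refine Or.inr ⟨le_trans hax le_sup_left, le_trans hax le_sup_left, ?_⟩
        constructor
        · intro h
          rcases hrjp x z hax hz h with h' | h'
          · exact le_sup_of_le_left h'
          · exact le_sup_of_le_right (hiff.1 h')
        · intro h
          rcases hrjp x w hax hw h with h' | h'
          · exact le_sup_of_le_left h'
          · exact le_sup_of_le_right (hiff.2 h')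
    rintro x y z w (h | ⟨h1, h2, h3⟩) (h' | ⟨h4, h5, h6⟩)
    · exact Or.inl (by rw [h, h'])
    · rcases key x z w h4 h5 h6 with hk | hk
      · exact Or.inl (by rw [← h, hk])
      · exact Or.inr ⟨hk.1, h ▸ hk.2.1, h ▸ hk.2.2⟩
    · rcases key z x y h1 h2 h3 with hk | hk
      · exact Or.inl (by rw [sup_comm x z, sup_comm y w, ← h', hk])
      · exact Or.inr ⟨by rw [sup_comm]; exact hk.1, by rw [sup_comm, ← h']; exact hk.2.1,
          by rw [sup_comm x z, sup_comm y w, ← h']; exact hk.2.2⟩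
    · refine Or.inr ⟨le_trans h1 le_sup_left, le_trans h2 le_sup_left, ?_⟩
      constructor
      · intro h
        rcases hrjp x z h1 h4 h with h' | h'
        · exact le_sup_of_le_left (h3.1 h')
        · exact le_sup_of_le_right (h6.1 h')
      · intro h
        rcases hrjp y w h2 h5 h with h' | h'
        · exact le_sup_of_le_left (h3.2 h')
        · exact le_sup_of_le_right (h6.2 h')
  · -- inf compatibility
    have key : ∀ x z w : K, a ≤ z → a ≤ w → (a₂ ≤ z ↔ a₂ ≤ w) →
        (x ⊓ z = x ⊓ w) ∨ (a ≤ x ⊓ z ∧ a ≤ x ⊓ w ∧ (a₂ ≤ x ⊓ z ↔ a₂ ≤ x ⊓ w)) := by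
      intro x z w hz hw hiff
      by_cases hxb : x = b
      · subst hxb
        exact Or.inl (by rw [inf_eq_left.2 (hb z), inf_eq_left.2 (hb w)])
      · have hax : a ≤ x := ha x hxb
        refine Or.inr ⟨le_inf hax hz, le_inf hax hw, ?_⟩
        simp only [le_inf_iff]
        exact and_congr Iff.rfl hiff
    rintro x y z w (h | ⟨h1, h2, h3⟩) (h' | ⟨h4, h5, h6⟩)
    · exact Or.inl (by rw [h, h'])
    · rcases key x z w h4 h5 h6 with hk | hk
      · exact Or.inl (by rw [← h, hk])
      · exact Or.inr ⟨hk.1, h ▸ hk.2.1, h ▸ hk.2.2⟩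
    · rcases key z x y h1 h2 h3 with hk | hk
      · exact Or.inl (by rw [inf_comm x z, inf_comm y w, ← h', hk])
      · exact Or.inr ⟨by rw [inf_comm]; exact hk.1, by rw [inf_comm, ← h']; exact hk.2.1,
          by rw [inf_comm x z, inf_comm y w, ← h']; exact hk.2.2⟩
    · refine Or.inr ⟨le_inf h1 h4, le_inf h2 h5, ?_⟩
      simp only [le_inf_iff]
      exact and_congr h3 h6

@[simp] lemma conUpper_rel (b a a₂ : K) (hb ha hrjp) (x y : K) :
    (conUpper b a a₂ hb ha hrjp).1 x y ↔
      (x = y ∨ (a ≤ x ∧ a ≤ y ∧ (a₂ ≤ x ↔ a₂ ≤ y))) := Iff.rfl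

end Constructions2

section Pigeon

/-- If four pairwise distinct elements all lie in a four-element list, and every element
lies in that list, then every element is one of the four. -/
lemma four_pigeon {X : Type*} {p q r s w x y z : X}
    (hw : w = p ∨ w = q ∨ w = r ∨ w = s) (hx : x = p ∨ x = q ∨ x = r ∨ x = s)
    (hy : y = p ∨ y = q ∨ y = r ∨ y = s) (hz : z = p ∨ z = q ∨ z = r ∨ z = s)
    (hwx : w ≠ x) (hwy : w ≠ y) (hwz : w ≠ z) (hxy : x ≠ y) (hxz : x ≠ z) (hyz : y ≠ z)
    {θ : X} (hθ : θ = p ∨ θ = q ∨ θ = r ∨ θ = s) :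
    θ = w ∨ θ = x ∨ θ = y ∨ θ = z := by
  classical
  by_contra hcon
  push_neg at hcon
  obtain ⟨h1, h2, h3, h4⟩ := hcon
  have hsub : ({θ, w, x, y, z} : Finset X) ⊆ {p, q, r, s} := by
    intro v hv
    simp only [Finset.mem_insert, Finset.mem_singleton] at hv
    rcases hv with rfl | rfl | rfl | rfl | rfl <;>
      simp only [Finset.mem_insert, Finset.mem_singleton] <;> tauto
  have hcard : ({θ, w, x, y, z} : Finset X).card = 5 := by
    rw [Finset.card_insert_of_notMem (by simp [h1, h2, h3, h4]),
      Finset.card_insert_of_notMem (by simp [hwx, hwy, hwz]),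
      Finset.card_insert_of_notMem (by simp [hxy, hxz]),
      Finset.card_insert_of_notMem (by simp [hyz]), Finset.card_singleton]
  have hle : ({θ, w, x, y, z} : Finset X).card ≤ ({p, q, r, s} : Finset X).card :=
    Finset.card_le_card hsub
  have : ({p, q, r, s} : Finset X).card ≤ 4 := by
    apply le_trans (Finset.card_insert_le _ _)
    have : ({q, r, s} : Finset X).card ≤ 3 := by
      apply le_trans (Finset.card_insert_le _ _)
      have : ({r, s} : Finset X).card ≤ 2 := by
        apply le_trans (Finset.card_insert_le _ _)
        simp
      omega
    omega
  omega

end Pigeon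

section Isos

variable {P : Type*} [PartialOrder P]

/-- A four-element "diamond" order is isomorphic to `Set (Fin 2)`. -/
lemma orderIso_boolSq {δ t1 t2 ν : P}
    (hall : ∀ x : P, x = δ ∨ x = t1 ∨ x = t2 ∨ x = ν)
    (hδ : ∀ x, δ ≤ x) (hν : ∀ x, x ≤ ν)
    (h12 : ¬ t1 ≤ t2) (h21 : ¬ t2 ≤ t1) :
    Nonempty (P ≃o Set (Fin 2)) := by
  classical
  have fin2 : ∀ i : Fin 2, i = 0 ∨ i = 1 := by decide
  set f : P → Set (Fin 2) := fun x => {i | (i = 0 ∧ t1 ≤ x) ∨ (i = 1 ∧ t2 ≤ x)} with hf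
  have ht1δ : ¬ t1 ≤ δ := fun h => h12 (h.trans (hδ t2))
  have ht2δ : ¬ t2 ≤ δ := fun h => h21 (h.trans (hδ t1))
  have le_iff : ∀ x y : P, x ≤ y ↔ f x ⊆ f y := by
    intro x y
    constructor
    · rintro h i (⟨hi, ht⟩ | ⟨hi, ht⟩)
      · exact Or.inl ⟨hi, ht.trans h⟩
      · exact Or.inr ⟨hi, ht.trans h⟩
    · intro hsub
      rcases hall x with hx | hx | hx | hx <;> rw [hx]
      · exact hδ y
      · have h0 : (0 : Fin 2) ∈ f t1 := Or.inl ⟨rfl, le_rfl⟩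
        rcases hsub (hx ▸ h0) with ⟨_, h⟩ | ⟨h, _⟩
        · exact h
        · exact absurd h (by decide)
      · have h1 : (1 : Fin 2) ∈ f t2 := Or.inr ⟨rfl, le_rfl⟩
        rcases hsub (hx ▸ h1) with ⟨h, _⟩ | ⟨_, h⟩
        · exact absurd h (by decide)
        · exact h
      · have h0 : (0 : Fin 2) ∈ f ν := Or.inl ⟨rfl, hν t1⟩
        have h1 : (1 : Fin 2) ∈ f ν := Or.inr ⟨rfl, hν t2⟩
        have ht1y : t1 ≤ y := by
          rcases hsub (hx ▸ h0) with ⟨_, h⟩ | ⟨h, _⟩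
          · exact h
          · exact absurd h (by decide)
        have ht2y : t2 ≤ y := by
          rcases hsub (hx ▸ h1) with ⟨h, _⟩ | ⟨_, h⟩
          · exact absurd h (by decide)
          · exact h
        rcases hall y with hy | hy | hy | hy <;> rw [hy] at ht1y ht2y ⊢
        · exact absurd ht1y ht1δ
        · exact absurd ht2y h21
        · exact absurd ht1y h12
  have finj : Function.Injective f := fun x y h =>
    le_antisymm ((le_iff x y).2 h.le) ((le_iff y x).2 h.ge)
  have fδ : f δ = ∅ := by
    apply Set.eq_empty_iff_forall_notMem.2
    rintro i (⟨_, h⟩ | ⟨_, h⟩)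
    · exact ht1δ h
    · exact ht2δ h
  have ft1 : f t1 = {0} := by
    apply Set.ext
    intro i
    constructor
    · rintro (⟨h, _⟩ | ⟨_, h⟩)
      · exact h
      · exact absurd h h21
    · rintro rfl
      exact Or.inl ⟨rfl, le_rfl⟩
  have ft2 : f t2 = {1} := by
    apply Set.ext
    intro i
    constructor
    · rintro (⟨_, h⟩ | ⟨h, _⟩)
      · exact absurd h h12
      · exact h
    · rintro rfl
      exact Or.inr ⟨rfl, le_rfl⟩
  have fν : f ν = Set.univ := by
    apply Set.eq_univ_iff_forall.2
    intro i
    rcases fin2 i with rfl | rfl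
    · exact Or.inl ⟨rfl, hν t1⟩
    · exact Or.inr ⟨rfl, hν t2⟩
  have fsurj : Function.Surjective f := by
    intro S
    by_cases h0 : (0 : Fin 2) ∈ S <;> by_cases h1 : (1 : Fin 2) ∈ S
    · refine ⟨ν, ?_⟩
      rw [fν]
      apply (Set.eq_univ_iff_forall.2 ?_).symm
      intro i
      rcases fin2 i with rfl | rfl
      · exact h0
      · exact h1
    · refine ⟨t1, ?_⟩
      rw [ft1]
      apply Set.ext
      intro i
      rcases fin2 i with rfl | rfl
      · exact iff_of_true rfl h0
      · exact iff_of_false (by decide) h1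
    · refine ⟨t2, ?_⟩
      rw [ft2]
      apply Set.ext
      intro i
      rcases fin2 i with rfl | rfl
      · exact iff_of_false (by decide) h0
      · exact iff_of_true rfl h1
    · refine ⟨δ, ?_⟩
      rw [fδ]
      apply Set.ext
      intro i
      rcases fin2 i with rfl | rfl
      · exact iff_of_false (fun h => h) h0
      · exact iff_of_false (fun h => h) h1
  exact ⟨RelIso.mk (Equiv.ofBijective f ⟨finj, fsurj⟩) (fun {a b} => (le_iff a b).symm)⟩

/-- A three-element chain is isomorphic to `Fin 3`. -/
lemma orderIso_fin3 {x0 x1 x2 : P}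
    (hall : ∀ x : P, x = x0 ∨ x = x1 ∨ x = x2)
    (h01 : x0 < x1) (h12 : x1 < x2) : Nonempty (P ≃o Fin 3) := by
  classical
  have fin3 : ∀ i : Fin 3, i = 0 ∨ i = 1 ∨ i = 2 := by decide
  have n01 : x0 ≠ x1 := h01.ne
  have n12 : x1 ≠ x2 := h12.ne
  have n02 : x0 ≠ x2 := (h01.trans h12).ne
  set f : P → Fin 3 := fun x => if x = x0 then 0 else if x = x1 then 1 else 2 with hf
  have fv0 : f x0 = 0 := by simp [hf]
  have fv1 : f x1 = 1 := by simp [hf, Ne.symm n01]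
  have fv2 : f x2 = 2 := by simp [hf, Ne.symm n02, Ne.symm n12]
  have le_iff : ∀ x y : P, x ≤ y ↔ f x ≤ f y := by
    intro x y
    rcases hall x with hx | hx | hx <;> rcases hall y with hy | hy | hy <;> rw [hx, hy]
    · rw [fv0]; simp
    · rw [fv0, fv1]; exact iff_of_true h01.le (by decide)
    · rw [fv0, fv2]; exact iff_of_true (h01.le.trans h12.le) (by decide)
    · rw [fv1, fv0]; exact iff_of_false h01.not_ge (by decide)
    · rw [fv1]; simp
    · rw [fv1, fv2]; exact iff_of_true h12.le (by decide)
    · rw [fv2, fv0]; exact iff_of_false (h01.trans h12).not_ge (by decide)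
    · rw [fv2, fv1]; exact iff_of_false h12.not_ge (by decide)
    · rw [fv2]; simp
  have finj : Function.Injective f := fun x y h =>
    le_antisymm ((le_iff x y).2 h.le) ((le_iff y x).2 h.ge)
  have fsurj : Function.Surjective f := by
    intro i
    rcases fin3 i with rfl | rfl | rfl
    · exact ⟨x0, fv0⟩
    · exact ⟨x1, fv1⟩
    · exact ⟨x2, fv2⟩
  exact ⟨RelIso.mk (Equiv.ofBijective f ⟨finj, fsurj⟩) (fun {a b} => (le_iff a b).symm)⟩

end Isos


/-- A slim semimodular lattice with exactly two join-irreducible congruences has the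
four-element Boolean congruence lattice and is either the three-element chain or the
four-element Boolean lattice. -/
theorem slim_semimodular_two_ji_congruences {K : Type*} [Lattice K] [Fintype K]
    (hsm : ∀ x y : K, x ⊓ y ⋖ x → y ⋖ x ⊔ y)
    (hslim : ∃ C U : Set K, IsChain (· ≤ ·) C ∧ IsChain (· ≤ ·) U ∧
      {a : K | SupIrred a} = C ∪ U)
    (hji : Nat.card {θ : LatCon K // ∃! ψ : LatCon K, ψ ⋖ θ} = 2) :
    Nonempty (LatCon K ≃o Set (Fin 2)) ∧
      (Nonempty (K ≃o Fin 3) ∨ Nonempty (K ≃o Set (Fin 2))) := by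
  classical
  letI latL : Lattice (LatCon K) := latConLattice
  letI latB : OrderBot (LatCon K) := latConOrderBot
  -- extract the two sup-irreducible congruences
  rw [Nat.card_eq_two_iff] at hji
  obtain ⟨A, B, hAB, huniv⟩ := hji
  obtain ⟨α, hαcov⟩ := A
  obtain ⟨β, hβcov⟩ := B
  have hαβ : α ≠ β := fun h => hAB (Subtype.ext h)
  have hsupα : SupIrred α := (supIrred_iff_unique_covBy α).2 hαcov
  have hsupβ : SupIrred β := (supIrred_iff_unique_covBy β).2 hβcov
  have hall2 : ∀ θ : LatCon K, SupIrred θ → θ = α ∨ θ = β := by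
    intro θ hθ
    have hmem : (⟨θ, (supIrred_iff_unique_covBy θ).1 hθ⟩ :
        {θ : LatCon K // ∃! ψ : LatCon K, ψ ⋖ θ}) ∈
        ({⟨α, hαcov⟩, ⟨β, hβcov⟩} : Set {θ : LatCon K // ∃! ψ : LatCon K, ψ ⋖ θ}) := by
      rw [huniv]; exact Set.mem_univ _
    rcases hmem with h | h
    · exact Or.inl (congrArg Subtype.val h)
    · exact Or.inr (congrArg Subtype.val h)
  have hfour : ∀ θ : LatCon K, θ = (conBot : LatCon K) ∨ θ = α ∨ θ = β ∨ θ = α ⊔ β :=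
    mem_four_of_supIrred hall2
  -- K is nonempty
  rcases isEmpty_or_nonempty K with hK | hK
  · exfalso
    apply hαβ
    apply latCon_ext
    intro x y
    exact (IsEmpty.false x).elim
  -- bottom and top of K
  obtain ⟨bK, hbK⟩ : ∃ b : K, ∀ x, b ≤ x :=
    ⟨Finset.univ.inf' Finset.univ_nonempty id, fun x => Finset.inf'_le id (Finset.mem_univ x)⟩
  obtain ⟨tK, htK⟩ : ∃ t : K, ∀ x, x ≤ t :=
    ⟨Finset.univ.sup' Finset.univ_nonempty id, fun x => Finset.le_sup' id (Finset.mem_univ x)⟩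
  letI : OrderBot K := { bot := bK, bot_le := hbK }
  letI : OrderTop K := { top := tK, le_top := htK }
  -- K has at least two elements
  by_cases hbt : (⊥ : K) = ⊤
  · exfalso
    have hone : ∀ x y : K, x = y := by
      intro x y
      have h1 : x = ⊥ := le_antisymm ((le_top : x ≤ ⊤).trans hbt.symm.le) bot_le
      have h2 : y = ⊥ := le_antisymm ((le_top : y ≤ ⊤).trans hbt.symm.le) bot_le
      rw [h1, h2]
    apply hαβ
    apply latCon_ext
    intro x y
    exact iff_of_true (hone x y ▸ α.2.1.refl x) (hone x y ▸ β.2.1.refl x)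
  have hbtlt : (⊥ : K) < ⊤ := lt_of_le_of_ne bot_le hbt
  -- an atom of K
  obtain ⟨a, haS, -, hamin⟩ := exists_minimal_le' (S := {x : K | ⊥ < x}) hbtlt
  have hatom : IsAtom a := by
    refine ⟨haS.ne', fun y hy => ?_⟩
    by_contra hyb
    exact hamin y (bot_lt_iff_ne_bot.2 hyb) hy
  -- slimness and join-primality of atoms
  obtain ⟨C, U, hC, hU, hCUeq⟩ := hslim
  have hCU : ∀ j : K, SupIrred j → j ∈ C ∪ U := fun j hj => hCUeq ▸ hj
  have hjpa : ∀ x y : K, a ≤ x ⊔ y → a ≤ x ∨ a ≤ y := atom_joinPrime hC hU hCU hatom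
  have hnale_bot : ¬ a ≤ (⊥ : K) := fun h => hatom.1 (le_bot_iff.1 h)
  by_cases huniq : ∀ x : K, x ≠ ⊥ → a ≤ x
  · -- UNIQUE ATOM CASE
    -- the congruence gluing ⊥ and a
    have hsup0 : ∀ c : K, (⊥ : K) ⊔ c = a ⊔ c ∨ ((⊥ : K) ⊔ c = ⊥ ∧ a ⊔ c = a) := by
      intro c
      by_cases hc : c = ⊥
      · right; rw [hc]; constructor <;> exact sup_bot_eq _
      · left; rw [bot_sup_eq, sup_eq_right.2 (huniq c hc)]
    have hinf0 : ∀ c : K, (⊥ : K) ⊓ c = a ⊓ c ∨ ((⊥ : K) ⊓ c = ⊥ ∧ a ⊓ c = a) := by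
      intro c
      by_cases hc : c = ⊥
      · left; rw [hc, inf_bot_eq, inf_bot_eq]
      · right; exact ⟨bot_inf_eq c, inf_eq_left.2 (huniq c hc)⟩
    set θ₀ : LatCon K := conPair ⊥ a hsup0 hinf0 with hθ₀
    set χa : LatCon K := conPrime a hjpa with hχa
    -- a is not the top
    have hane_top : a ≠ ⊤ := by
      intro hat
      have hclass : ∀ x : K, x = ⊥ ∨ x = ⊤ := by
        intro x
        by_cases hx : x = ⊥
        · exact Or.inl hx
        · exact Or.inr (le_antisymm le_top (hat ▸ huniq x hx))
      have hK2 : ∀ θ : LatCon K, θ = (conBot : LatCon K) ∨ θ = (conTop : LatCon K) := by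
        intro θ
        by_cases hθ : θ.1 ⊥ ⊤
        · right
          apply latCon_ext
          intro x y
          refine iff_of_true ?_ trivial
          rcases hclass x with rfl | rfl <;> rcases hclass y with rfl | rfl
          · exact θ.2.1.refl ⊥
          · exact hθ
          · exact θ.2.1.symm hθ
          · exact θ.2.1.refl ⊤
        · left
          apply latCon_ext
          intro x y
          constructor
          · intro h
            rcases hclass x with rfl | rfl <;> rcases hclass y with rfl | rfl
            · rfl
            · exact absurd h hθ
            · exact absurd (θ.2.1.symm h) hθ
            · rfl
          · rintro rfl
            exact θ.2.1.refl x
      have hαbot : α ≠ (conBot : LatCon K) := hsupα.ne_bot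
      have hβbot : β ≠ (conBot : LatCon K) := hsupβ.ne_bot
      rcases hK2 α with h | h
      · exact hαbot h
      · rcases hK2 β with h' | h'
        · exact hβbot h'
        · exact hαβ (h.trans h'.symm)
    have halttop : a < ⊤ := lt_of_le_of_ne le_top hane_top
    -- witness relations
    have w1 : θ₀.1 ⊥ a := Or.inr (Or.inl ⟨rfl, rfl⟩)
    have w2 : ¬ χa.1 ⊥ a := by
      intro h
      exact hnale_bot ((h : a ≤ ⊥ ↔ a ≤ a).2 le_rfl)
    have w3 : χa.1 a ⊤ := iff_of_true le_rfl le_top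
    have w4 : ¬ θ₀.1 a ⊤ := by
      rintro (h | ⟨h1, h2⟩ | ⟨h1, h2⟩)
      · exact hane_top h
      · exact hatom.1 h1
      · exact hbt h2.symm
    have w5 : ¬ (conBot : LatCon K).1 ⊥ a := fun h => hatom.1 h.symm
    have w6 : (conTop : LatCon K).1 ⊥ a := trivial
    have w7 : (conTop : LatCon K).1 a ⊤ := trivial
    -- the four congruences are distinct
    have d1 : (conBot : LatCon K) ≠ θ₀ := by
      intro h
      rw [← h] at w1
      exact w5 w1
    have d2 : (conBot : LatCon K) ≠ χa := by
      intro h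
      have : (conBot : LatCon K).1 a ⊤ := by rw [h]; exact w3
      exact hane_top this
    have d3 : (conBot : LatCon K) ≠ (conTop : LatCon K) := by
      intro h
      rw [← h] at w6
      exact w5 w6
    have d4 : θ₀ ≠ χa := by
      intro h
      rw [h] at w1
      exact w2 w1
    have d5 : θ₀ ≠ (conTop : LatCon K) := by
      intro h
      rw [← h] at w7
      exact w4 w7
    have d6 : χa ≠ (conTop : LatCon K) := by
      intro h
      rw [← h] at w6
      exact w2 w6
    have hall4 : ∀ θ : LatCon K, θ = (conBot : LatCon K) ∨ θ = θ₀ ∨ θ = χa ∨ θ = (conTop : LatCon K) := by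
      intro θ
      exact four_pigeon (hfour (conBot : LatCon K)) (hfour θ₀) (hfour χa) (hfour (conTop : LatCon K))
        d1 d2 d3 d4 d5 d6 (hfour θ)
    have conIso : Nonempty (LatCon K ≃o Set (Fin 2)) := by
      apply orderIso_boolSq hall4
      · exact fun θ x y h => h ▸ θ.2.1.refl x
      · exact fun θ x y _ => trivial
      · exact latCon_not_le_of_witness w1 w2
      · exact latCon_not_le_of_witness w3 w4
    refine ⟨conIso, Or.inl ?_⟩
    -- now show K is the three-element chain
    set S : Set K := {x : K | a < x} with hS
    have htopS : (⊤ : K) ∈ S := halttop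
    obtain ⟨a₂, ha₂S, -, ha₂min⟩ := exists_minimal_le' htopS
    have ha₂a : a < a₂ := ha₂S
    have hna₂a : ¬ a₂ ≤ a := fun h => ha₂a.not_ge h
    -- relative join-primality of a₂ within the filter above a, via slimness of `Set.Ici a`
    have hrjp : ∀ x y : K, a ≤ x → a ≤ y → a₂ ≤ x ⊔ y → a₂ ≤ x ∨ a₂ ≤ y := by
      set I := Set.Ici a with hI
      set a₂' : I := ⟨a₂, ha₂a.le⟩ with ha₂'
      have hatom₂ : IsAtom a₂' := by
        constructor
        · intro h
          have : a₂ = a := congrArg Subtype.val h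
          exact ha₂a.ne' this
        · intro y hy
          have hyval : (y : K) < a₂ := Subtype.coe_lt_coe.2 hy
          apply Subtype.ext
          show (y : K) = a
          rcases eq_or_lt_of_le (y.2 : a ≤ (y : K)) with h | h
          · exact h.symm
          · exact absurd hyval (ha₂min (y : K) h)
      set C' : Set I := {x : I | ∃ j ∈ C, (x : K) = j ⊔ a} with hC'
      set U' : Set I := {x : I | ∃ j ∈ U, (x : K) = j ⊔ a} with hU'
      have hCchain' : IsChain (· ≤ ·) C' := by
        rintro x ⟨j₁, hj₁, hx⟩ y ⟨j₂, hj₂, hy⟩ hne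
        rcases eq_or_ne j₁ j₂ with rfl | hjne
        · exact absurd (Subtype.ext (hx.trans hy.symm)) hne
        · rcases hC hj₁ hj₂ hjne with h | h
          · exact Or.inl (show (x : K) ≤ (y : K) by rw [hx, hy]; exact sup_le_sup_right h a)
          · exact Or.inr (show (y : K) ≤ (x : K) by rw [hx, hy]; exact sup_le_sup_right h a)
      have hUchain' : IsChain (· ≤ ·) U' := by
        rintro x ⟨j₁, hj₁, hx⟩ y ⟨j₂, hj₂, hy⟩ hne
        rcases eq_or_ne j₁ j₂ with rfl | hjne
        · exact absurd (Subtype.ext (hx.trans hy.symm)) hne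
        · rcases hU hj₁ hj₂ hjne with h | h
          · exact Or.inl (show (x : K) ≤ (y : K) by rw [hx, hy]; exact sup_le_sup_right h a)
          · exact Or.inr (show (y : K) ≤ (x : K) by rw [hx, hy]; exact sup_le_sup_right h a)
      have hCU' : ∀ x' : I, SupIrred x' → x' ∈ C' ∪ U' := by
        intro x' hx'
        obtain ⟨Sx, hSx, hsupx⟩ := exists_supIrred_decomp (x' : K)
        set SC : Finset K := Sx.filter (· ∈ C) with hSC
        set SU : Finset K := Sx.filter (· ∈ U) with hSU
        have hsplit : (x' : K) = (SC.sup id ⊔ a) ⊔ (SU.sup id ⊔ a) := by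
          apply le_antisymm
          · have h1 : Sx.sup id ≤ SC.sup id ⊔ SU.sup id := by
              apply Finset.sup_le
              intro j hj
              rcases hCU j (hSx j hj).1 with h | h
              · exact le_sup_of_le_left (Finset.le_sup (f := id) (Finset.mem_filter.2 ⟨hj, h⟩))
              · exact le_sup_of_le_right (Finset.le_sup (f := id) (Finset.mem_filter.2 ⟨hj, h⟩))
            calc (x' : K) = Sx.sup id := hsupx.symm
              _ ≤ SC.sup id ⊔ SU.sup id := h1
              _ ≤ (SC.sup id ⊔ a) ⊔ (SU.sup id ⊔ a) := sup_le_sup le_sup_left le_sup_left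
          · apply sup_le
            · apply sup_le
              · exact Finset.sup_le fun j hj => (hSx j (Finset.mem_filter.1 hj).1).2
              · exact x'.2
            · apply sup_le
              · exact Finset.sup_le fun j hj => (hSx j (Finset.mem_filter.1 hj).1).2
              · exact x'.2
        set u1 : I := ⟨SC.sup id ⊔ a, le_sup_right⟩ with hu1
        set u2 : I := ⟨SU.sup id ⊔ a, le_sup_right⟩ with hu2
        have hx'eq : u1 ⊔ u2 = x' := by
          apply Subtype.ext
          exact hsplit.symm
        rcases hx'.2 hx'eq with h | h
        · left
          have hval : (x' : K) = SC.sup id ⊔ a := by rw [← h]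
          rcases chain_finset_sup hC SC (fun j hj => (Finset.mem_filter.1 hj).2) with hb | hm
          · exfalso
            apply hx'.ne_bot
            apply Subtype.ext
            show (x' : K) = a
            rw [hval, hb, bot_sup_eq]
          · exact ⟨SC.sup id, (Finset.mem_filter.1 hm).2, hval⟩
        · right
          have hval : (x' : K) = SU.sup id ⊔ a := by rw [← h]
          rcases chain_finset_sup hU SU (fun j hj => (Finset.mem_filter.1 hj).2) with hb | hm
          · exfalso
            apply hx'.ne_bot
            apply Subtype.ext
            show (x' : K) = a
            rw [hval, hb, bot_sup_eq]
          · exact ⟨SU.sup id, (Finset.mem_filter.1 hm).2, hval⟩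
      have hjp₂ := atom_joinPrime hCchain' hUchain' hCU' hatom₂
      intro x y hx hy h
      have := hjp₂ ⟨x, hx⟩ ⟨y, hy⟩ (show a₂' ≤ ⟨x, hx⟩ ⊔ ⟨y, hy⟩ from h)
      exact this
    -- case: is a₂ below everything strictly above a?
    by_cases hb₂ : ∃ y, a < y ∧ ¬ a₂ ≤ y
    · -- a second minimal element above a: build a fifth congruence, contradiction
      exfalso
      obtain ⟨b₂, hb₂S, hb₂n⟩ := hb₂
      set χ' : LatCon K := conUpper ⊥ a a₂ (fun x => bot_le) huniq hrjp with hχ'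
      have wa : χ'.1 a b₂ := Or.inr ⟨le_rfl, hb₂S.le, iff_of_false hna₂a hb₂n⟩
      have wb : χa.1 a a₂ := iff_of_true le_rfl ha₂a.le
      have wc : ¬ χ'.1 a a₂ := by
        rintro (h | ⟨-, -, h⟩)
        · exact ha₂a.ne h
        · exact hna₂a (h.2 le_rfl)
      have wd : ¬ χ'.1 ⊥ a := by
        rintro (h | ⟨h1, -, -⟩)
        · exact hatom.1 h.symm
        · exact hnale_bot h1
      rcases hall4 χ' with h | h | h | h
      · rw [h] at wa
        exact hb₂S.ne wa
      · rw [h] at wa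
        rcases wa with h' | ⟨h1, h2⟩ | ⟨h1, h2⟩
        · exact hb₂S.ne h'
        · exact hatom.1 h1
        · exact (haS.trans hb₂S).ne' h2
      · rw [← h] at wb
        exact wc wb
      · rw [h] at wd
        exact wd trivial
    · -- a₂ is below every element strictly above a
      push_neg at hb₂
      by_cases ha₂top : a₂ = ⊤
      · -- K is the three-element chain ⊥ < a < ⊤
        have hallK : ∀ x : K, x = ⊥ ∨ x = a ∨ x = ⊤ := by
          intro x
          by_cases hx : x = ⊥
          · exact Or.inl hx
          rcases eq_or_lt_of_le (huniq x hx) with h | h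
          · exact Or.inr (Or.inl h.symm)
          · exact Or.inr (Or.inr (le_antisymm le_top (ha₂top ▸ hb₂ x h)))
        exact orderIso_fin3 hallK haS halttop
      · exfalso
        have hsup' : ∀ c : K, a ⊔ c = a₂ ⊔ c ∨ (a ⊔ c = a ∧ a₂ ⊔ c = a₂) := by
          intro c
          by_cases hc : c = ⊥
          · right; rw [hc]; constructor <;> exact sup_bot_eq _
          by_cases hca : c = a
          · right; rw [hca]
            exact ⟨sup_idem a, sup_eq_left.2 ha₂a.le⟩
          · have hac : a < c := lt_of_le_of_ne (huniq c hc) (Ne.symm hca)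
            left; rw [sup_eq_right.2 hac.le, sup_eq_right.2 (hb₂ c hac)]
        have hinf' : ∀ c : K, a ⊓ c = a₂ ⊓ c ∨ (a ⊓ c = a ∧ a₂ ⊓ c = a₂) := by
          intro c
          by_cases hc : c = ⊥
          · left; rw [hc, inf_bot_eq, inf_bot_eq]
          by_cases hca : c = a
          · left; rw [hca, inf_idem, inf_eq_right.2 ha₂a.le]
          · have hac : a < c := lt_of_le_of_ne (huniq c hc) (Ne.symm hca)
            right; exact ⟨inf_eq_left.2 hac.le, inf_eq_left.2 (hb₂ c hac)⟩
        set ψ : LatCon K := conPair a a₂ hsup' hinf' with hψ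
        have wa : ψ.1 a a₂ := Or.inr (Or.inl ⟨rfl, rfl⟩)
        rcases hall4 ψ with h | h | h | h
        · rw [h] at wa
          exact ha₂a.ne wa
        · rw [h] at wa
          rcases wa with h' | ⟨h1, h2⟩ | ⟨h1, h2⟩
          · exact ha₂a.ne h'
          · exact hatom.1 h1
          · exact (haS.trans ha₂a).ne' h2
        · have hψtop : ψ.1 a ⊤ := by rw [h]; exact w3
          rcases hψtop with h' | ⟨h1, h2⟩ | ⟨h1, h2⟩
          · exact hane_top h'
          · exact ha₂top h2.symm
          · exact hane_top h2.symm
        · have hψba : ψ.1 ⊥ a := by rw [h]; exact trivial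
          rcases hψba with h' | ⟨h1, h2⟩ | ⟨h1, h2⟩
          · exact hatom.1 h'.symm
          · exact hatom.1 h1.symm
          · exact (haS.trans ha₂a).ne' h1.symm
  · -- TWO ATOM CASE
    push_neg at huniq
    obtain ⟨z, hz0, hzna⟩ := huniq
    obtain ⟨b, hbS, hbz, hbmin⟩ :=
      exists_minimal_le' (S := {x : K | ⊥ < x}) (bot_lt_iff_ne_bot.2 hz0)
    have hbatom : IsAtom b := by
      refine ⟨hbS.ne', fun y hy => ?_⟩
      by_contra hyb
      exact hbmin y (bot_lt_iff_ne_bot.2 hyb) hy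
    have hab : a ≠ b := fun h => hzna (h ▸ hbz)
    have hnab : ¬ a ≤ b := by
      intro h
      rcases eq_or_lt_of_le h with h' | h'
      · exact hab h'
      · exact hatom.1 (hbatom.2 a h')
    have hnba : ¬ b ≤ a := by
      intro h
      rcases eq_or_lt_of_le h with h' | h'
      · exact hab h'.symm
      · exact hbatom.1 (hatom.2 b h')
    have hjpb : ∀ x y : K, b ≤ x ⊔ y → b ≤ x ∨ b ≤ y := atom_joinPrime hC hU hCU hbatom
    set χa : LatCon K := conPrime a hjpa with hχa
    set χb : LatCon K := conPrime b hjpb with hχb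
    have hnble_bot : ¬ b ≤ (⊥ : K) := fun h => hbatom.1 (le_bot_iff.1 h)
    have w1 : χa.1 ⊥ b := iff_of_false hnale_bot hnab
    have w2 : ¬ χb.1 ⊥ b := fun h => hnble_bot ((h : b ≤ ⊥ ↔ b ≤ b).2 le_rfl)
    have w3 : χb.1 ⊥ a := iff_of_false hnble_bot hnba
    have w4 : ¬ χa.1 ⊥ a := fun h => hnale_bot ((h : a ≤ ⊥ ↔ a ≤ a).2 le_rfl)
    have w6 : (conTop : LatCon K).1 ⊥ a := trivial
    have w7 : (conTop : LatCon K).1 ⊥ b := trivial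
    have d1 : (conBot : LatCon K) ≠ χa := by
      intro h
      rw [← h] at w1
      exact hbatom.1 w1.symm
    have d2 : (conBot : LatCon K) ≠ χb := by
      intro h
      rw [← h] at w3
      exact hatom.1 w3.symm
    have d3 : (conBot : LatCon K) ≠ (conTop : LatCon K) := by
      intro h
      have : (conBot : LatCon K).1 ⊥ a := by rw [h]; exact w6
      exact hatom.1 this.symm
    have d4 : χa ≠ χb := by
      intro h
      rw [h] at w1
      exact w2 w1
    have d5 : χa ≠ (conTop : LatCon K) := by
      intro h
      rw [← h] at w6
      exact w4 w6
    have d6 : χb ≠ (conTop : LatCon K) := by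
      intro h
      rw [← h] at w7
      exact w2 w7
    have hall4 : ∀ θ : LatCon K, θ = (conBot : LatCon K) ∨ θ = χa ∨ θ = χb ∨ θ = (conTop : LatCon K) := by
      intro θ
      exact four_pigeon (hfour (conBot : LatCon K)) (hfour χa) (hfour χb) (hfour (conTop : LatCon K))
        d1 d2 d3 d4 d5 d6 (hfour θ)
    have conIso : Nonempty (LatCon K ≃o Set (Fin 2)) := by
      apply orderIso_boolSq hall4
      · exact fun θ x y h => h ▸ θ.2.1.refl x
      · exact fun θ x y _ => trivial
      · exact latCon_not_le_of_witness w1 w2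
      · exact latCon_not_le_of_witness w3 w4
    set θm : LatCon K := conInf χa χb with hθm
    have hminj : ∀ x y : K, (a ≤ x ↔ a ≤ y) → (b ≤ x ↔ b ≤ y) → x = y := by
      intro x y h1 h2
      have hm : θm = (conBot : LatCon K) := by
        rcases hall4 θm with h | h | h | h
        · exact h
        · exfalso
          rw [← h] at w1
          exact w2 w1.2
        · exfalso
          rw [← h] at w3
          exact w4 w3.1
        · exfalso
          have : θm.1 ⊥ a := by rw [h]; exact w6
          exact w4 this.1
      have hxy : (conBot : LatCon K).1 x y := by
        rw [← hm]
        exact ⟨h1, h2⟩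
      exact hxy
    have hallK : ∀ x : K, x = ⊥ ∨ x = a ∨ x = b ∨ x = a ⊔ b := by
      intro x
      by_cases hax : a ≤ x <;> by_cases hbx : b ≤ x
      · exact Or.inr (Or.inr (Or.inr (hminj x (a ⊔ b)
          (iff_of_true hax le_sup_left) (iff_of_true hbx le_sup_right))))
      · exact Or.inr (Or.inl (hminj x a (iff_of_true hax le_rfl) (iff_of_false hbx hnba)))
      · exact Or.inr (Or.inr (Or.inl (hminj x b
          (iff_of_false hax hnab) (iff_of_true hbx le_rfl))))
      · exact Or.inl (hminj x ⊥ (iff_of_false hax hnale_bot) (iff_of_false hbx hnble_bot))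
    have hKiso : Nonempty (K ≃o Set (Fin 2)) := by
      apply orderIso_boolSq hallK (fun x => bot_le) ?_ hnab hnba
      intro x
      rcases hallK x with hx | hx | hx | hx
      · exact hx.trans_le bot_le
      · exact hx.trans_le le_sup_left
      · exact hx.trans_le le_sup_right
      · exact hx.le
    exact ⟨conIso, Or.inr hKiso⟩
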